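/- Let k be a positive integer and consider the market with D = {d₁, d₂}, H = {h₁, h₂}, 𝐗 = {x¹, …, x^k, w}, where x^i_D = d₁ and x^i_H = h₁ for i = 1, …, k, and w_D = d₂, w_H = h₂; hospital preferences ≻_{h₁}: {x^k} ≻ {x^{k−1}} ≻ ⋯ ≻ {x¹} ≻ ∅ (only singletons acceptable) and ≻_{h₂}: {w} ≻ ∅. Let P₁ be d₁'s preference {x¹} P₁ {x²} P₁ ⋯ P₁ {x^k} P₁ ∅. Then for any preference P₂ of d₂: if {w} P₂ ∅, the set of stable allocations at (P₁,P₂) is exactly {{x^j, w} : 1 ≤ j ≤ k}, and if ∅ P₂ {w}, it is exactly {{x^j} : 1 ≤ j ≤ k}. -/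

import Mathlib

set_option linter.unusedSectionVars false

namespace Matching

open Finset

/-- A many-to-one matching market with contracts: each contract `x` involves exactly one
doctor `xD x` and one hospital `xH x`; each hospital `h` has a fixed antisymmetric,
transitive and complete preference `prH h`, modelled as a linear order on sets of
contracts (only its comparisons between allocations of contracts involving `h` matter). -/
structure Market (D H X : Type*) where
  xD : X → D
  xH : X → H
  prH : H → LinearOrder (Finset X)

/-- A doctor's preference: an antisymmetric, transitive and complete preference, modelled
as a linear order on sets of contracts (only comparisons between `∅` and singletons of
contracts involving the doctor matter). -/
abbrev Pref (X : Type*) := LinearOrder (Finset X)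

/-- A profile of doctors' preferences. -/
abbrev Profile (D X : Type*) := D → Pref X

variable {D H X : Type*}
variable [DecidableEq D] [DecidableEq H] [DecidableEq X] [Fintype D] [Fintype H] [Fintype X]

/-- `Y_d` : the contracts in `Y` involving doctor `d`. -/
def docPart (M : Market D H X) (Y : Finset X) (d : D) : Finset X :=
  Y.filter fun x => M.xD x = d

/-- `Y_h` : the contracts in `Y` involving hospital `h`. -/
def hospPart (M : Market D H X) (Y : Finset X) (h : H) : Finset X :=
  Y.filter fun x => M.xH x = h

/-- An allocation: distinct contracts involve distinct doctors. -/
def IsAllocation (M : Market D H X) (Z : Finset X) : Prop :=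
  ∀ x ∈ Z, ∀ y ∈ Z, M.xD x = M.xD y → x = y

/-- `A(Y)` : the allocations contained in `Y`. -/
def allocs (M : Market D H X) (Y : Finset X) : Finset (Finset X) :=
  Y.powerset.filter fun Z => ∀ x ∈ Z, ∀ y ∈ Z, M.xD x = M.xD y → x = y

lemma empty_mem_allocs (M : Market D H X) (Y : Finset X) : ∅ ∈ allocs M Y := by
  simp [allocs]

/-- The best allocation contained in `Y` according to the linear order `pr`. -/
def bestAlloc (M : Market D H X) (pr : Pref X) (Y : Finset X) : Finset X :=
  @Finset.max' _ pr (allocs M Y) ⟨∅, empty_mem_allocs M Y⟩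

/-- `C_h(Y)` : hospital `h`'s choice set from `Y` (the `≻_h`-maximum of `A(Y_h)`). -/
def Ch (M : Market D H X) (h : H) (Y : Finset X) : Finset X :=
  bestAlloc M (M.prH h) (hospPart M Y h)

/-- `C_d(P_d, Y)` : doctor `d`'s choice set from `Y` (the `P_d`-maximum of `A(Y_d)`). -/
def Cd (M : Market D H X) (Pd : Pref X) (d : D) (Y : Finset X) : Finset X :=
  bestAlloc M Pd (docPart M Y d)

/-- `C_H(Y) = ∪_{h ∈ H} C_h(Y)`. -/
def CH (M : Market D H X) (Y : Finset X) : Finset X :=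
  univ.biUnion fun h => Ch M h Y

/-- `C_D(Y) = ∪_{d ∈ D} C_d(Y)`. -/
def CD (M : Market D H X) (P : Profile D X) (Y : Finset X) : Finset X :=
  univ.biUnion fun d => Cd M (P d) d Y

/-- Substitutability of hospital `h`'s preference: `x ∈ C_h(W)` and `x ∈ Y_h ⊆ W_h`
imply `x ∈ C_h(Y)`. -/
def Substitutable (M : Market D H X) (h : H) : Prop :=
  ∀ W Y : Finset X, hospPart M Y h ⊆ hospPart M W h →
    ∀ x ∈ hospPart M Y h, x ∈ Ch M h W → x ∈ Ch M h Y

/-- The sets `X^t` of still-available contracts in the doctor-proposing deferred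
acceptance algorithm (0-based: index `t` corresponds to iteration `t+1`). -/
def DDAsets (M : Market D H X) (P : Profile D X) : ℕ → Finset X
  | 0 => univ
  | t + 1 =>
      DDAsets M P t \ (CD M P (DDAsets M P t) \ CH M (CD M P (DDAsets M P t)))

/-- `O^t` : the offers made by the doctors at iteration `t` of D-DA (0-based). -/
def offers (M : Market D H X) (P : Profile D X) (t : ℕ) : Finset X :=
  CD M P (DDAsets M P t)

/-- `O_A^t = ∪_{k ≤ t} O^k` : the accumulated offers up to iteration `t` (0-based). -/
def accOffers (M : Market D H X) (P : Profile D X) (t : ℕ) : Finset X :=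
  (Finset.range (t + 1)).biUnion fun k => offers M P k

/-- D-DA has stopped at iteration `t`: all offers are accepted. -/
def DDAstopped (M : Market D H X) (P : Profile D X) (t : ℕ) : Prop :=
  CH M (offers M P t) = offers M P t

/-- The (0-based) last iteration of D-DA, i.e. `T - 1` where `T` is the number of
iterations of D-DA. -/
noncomputable def DDAlast (M : Market D H X) (P : Profile D X) : ℕ :=
  sInf {t | DDAstopped M P t}

/-- The output of D-DA (the algorithm provably stops by iteration `Fintype.card X`,
and once stopped the offer sets stay constant). -/
def DDAoutput (M : Market D H X) (P : Profile D X) : Finset X :=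
  CH M (offers M P (Fintype.card X))

/-- The doctor-optimal rule `φ̄`, giving doctor `d`'s outcome `φ̄_d(P)` (an element of
`A(𝐗_d)`, i.e. `∅` or a singleton). -/
def docOpt (M : Market D H X) (P : Profile D X) (d : D) : Finset X :=
  docPart M (DDAoutput M P) d

/-- The sets `X^t` of still-available contracts in the hospital-proposing deferred
acceptance algorithm (0-based). -/
def HDAsets (M : Market D H X) (P : Profile D X) : ℕ → Finset X
  | 0 => univ
  | t + 1 =>
      HDAsets M P t \ (CH M (HDAsets M P t) \ CD M P (CH M (HDAsets M P t)))

/-- The offers made by the hospitals at iteration `t` of H-DA (0-based). -/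
def hOffers (M : Market D H X) (P : Profile D X) (t : ℕ) : Finset X :=
  CH M (HDAsets M P t)

/-- The output of H-DA. -/
def HDAoutput (M : Market D H X) (P : Profile D X) : Finset X :=
  CD M P (hOffers M P (Fintype.card X))

/-- The hospital-optimal rule `φ̲`, giving doctor `d`'s outcome `φ̲_d(P)`. -/
def hospOpt (M : Market D H X) (P : Profile D X) (d : D) : Finset X :=
  docPart M (HDAoutput M P) d

/-- The option set `O^φ(P_d)` left open by `P_d` at the rule `φ`. -/
def optionSet (rule : Profile D X → D → Finset X) (d : D) (Pd : Pref X) :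
    Set (Finset X) :=
  {S | ∃ P : Profile D X, P d = Pd ∧ S = rule P d}

open scoped Classical in
/-- `W_d(pr, S)` : the `pr`-worst element of the (finite) set `S` of outcomes. -/
noncomputable def worstIn (pr : Pref X) (S : Set (Finset X)) : Finset X :=
  if h : S.Nonempty then
    @Finset.min' _ pr (Set.toFinite S).toFinset ((Set.Finite.toFinset_nonempty _).mpr h)
  else ∅

open scoped Classical in
/-- The `pr`-best element of the (finite) set `S` of outcomes. -/
noncomputable def bestIn (pr : Pref X) (S : Set (Finset X)) : Finset X :=
  if h : S.Nonempty then
    @Finset.max' _ pr (Set.toFinite S).toFinset ((Set.Finite.toFinset_nonempty _).mpr h)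
  else ∅

/-- `P'_d` is a manipulation of the rule at `P_d` : for some subprofile of the other
doctors, reporting `P'_d` gives a strictly `P_d`-better outcome than truth-telling. -/
def IsManip (rule : Profile D X → D → Finset X) (d : D) (Pd P'd : Pref X) : Prop :=
  ∃ P : Profile D X, P d = Pd ∧
    Pd.lt (rule P d) (rule (Function.update P d P'd) d)

/-- `P'_d` is an obvious manipulation of the rule at `P_d`. -/
def IsObviousManip (rule : Profile D X → D → Finset X) (d : D) (Pd P'd : Pref X) :
    Prop :=
  IsManip rule d Pd P'd ∧
    (Pd.lt (worstIn Pd (optionSet rule d Pd)) (worstIn Pd (optionSet rule d P'd)) ∨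
     Pd.lt (bestIn Pd (optionSet rule d Pd)) (bestIn Pd (optionSet rule d P'd)))

/-- A rule is not obviously manipulable (NOM). -/
def NOM (rule : Profile D X → D → Finset X) : Prop :=
  ∀ (d : D) (Pd P'd : Pref X), ¬ IsObviousManip rule d Pd P'd

/-- A rule is obviously manipulable (OM). -/
def OM (rule : Profile D X → D → Finset X) : Prop :=
  ∃ (d : D) (Pd P'd : Pref X), IsObviousManip rule d Pd P'd

/-- `Y` is a stable allocation at the profile `P` : it is an individually rational
allocation and admits no blocking contract. -/
def IsStable (M : Market D H X) (P : Profile D X) (Y : Finset X) : Prop :=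
  IsAllocation M Y ∧ CD M P Y = Y ∧ CH M Y = Y ∧
    ∀ x : X, x ∉ Y →
      ¬ (x ∈ Cd M (P (M.xD x)) (M.xD x) (insert x Y) ∧
         x ∈ Ch M (M.xH x) (insert x Y))

/-- `⌈kq⌉` where `k` is the number of stable allocations at `P`. -/
noncomputable def quantileIndex (M : Market D H X) (P : Profile D X) (q : ℝ) : ℕ :=
  ⌈(Set.ncard {Y : Finset X | IsStable M P Y} : ℝ) * q⌉₊

/-- `Z` is doctor `d`'s `⌈kq⌉`-th best outcome (according to `P d`) among the `k` stable
allocations at `P` : it is the outcome of some stable allocation, strictly fewer than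
`⌈kq⌉` stable allocations give `d` a strictly better outcome, and at least `⌈kq⌉` stable
allocations give `d` a weakly better outcome. -/
def IsQuantileOutcome (M : Market D H X) (P : Profile D X) (q : ℝ) (d : D)
    (Z : Finset X) : Prop :=
  (∃ Y : Finset X, IsStable M P Y ∧ docPart M Y d = Z) ∧
    Set.ncard {Y : Finset X | IsStable M P Y ∧ (P d).lt Z (docPart M Y d)} <
      quantileIndex M P q ∧
    quantileIndex M P q ≤
      Set.ncard {Y : Finset X | IsStable M P Y ∧ (P d).le Z (docPart M Y d)}

section Aux

lemma Pref.le_of_lt' (pr : Pref X) {a b : Finset X} (h : pr.lt a b) : pr.le a b :=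
  ((pr.lt_iff_le_not_ge a b).mp h).1

lemma mem_allocs' {M : Market D H X} {Y Z : Finset X} :
    Z ∈ allocs M Y ↔ Z ⊆ Y ∧ ∀ x ∈ Z, ∀ y ∈ Z, M.xD x = M.xD y → x = y := by
  simp [allocs]

lemma bestAlloc_mem (M : Market D H X) (pr : Pref X) (Y : Finset X) :
    bestAlloc M pr Y ∈ allocs M Y :=
  @Finset.max'_mem _ pr (allocs M Y) ⟨∅, empty_mem_allocs M Y⟩

lemma bestAlloc_subset (M : Market D H X) (pr : Pref X) (Y : Finset X) :
    bestAlloc M pr Y ⊆ Y :=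
  (mem_allocs'.mp (bestAlloc_mem M pr Y)).1

lemma bestAlloc_eq_of (M : Market D H X) (pr : Pref X) {Y Z : Finset X}
    (hZ : Z ∈ allocs M Y) (hmax : ∀ W ∈ allocs M Y, pr.le W Z) :
    bestAlloc M pr Y = Z :=
  pr.le_antisymm _ _ (hmax _ (bestAlloc_mem M pr Y)) (@Finset.le_max' _ pr _ _ hZ)

lemma bestAlloc_empty (M : Market D H X) (pr : Pref X) : bestAlloc M pr ∅ = ∅ := by
  apply bestAlloc_eq_of M pr (empty_mem_allocs M ∅)
  intro W hW
  have h : W = ∅ := Finset.subset_empty.mp (mem_allocs'.mp hW).1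
  subst h
  exact pr.le_refl _

lemma bestAlloc_single (M : Market D H X) (pr : Pref X) {a : X}
    (h : pr.lt ∅ {a}) : bestAlloc M pr {a} = {a} := by
  apply bestAlloc_eq_of M pr
  · exact mem_allocs'.mpr ⟨Finset.Subset.refl _, by simp⟩
  · intro W hW
    rcases Finset.subset_singleton_iff.mp (mem_allocs'.mp hW).1 with h1 | h1 <;> subst h1
    · exact Pref.le_of_lt' pr h
    · exact pr.le_refl _

lemma bestAlloc_single_bot (M : Market D H X) (pr : Pref X) {a : X}
    (h : pr.lt {a} ∅) : bestAlloc M pr {a} = ∅ := by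
  apply bestAlloc_eq_of M pr (empty_mem_allocs M _)
  intro W hW
  rcases Finset.subset_singleton_iff.mp (mem_allocs'.mp hW).1 with h1 | h1 <;> subst h1
  · exact pr.le_refl _
  · exact Pref.le_of_lt' pr h

lemma bestAlloc_pair (M : Market D H X) (pr : Pref X) {a b : X}
    (hD : M.xD a = M.xD b) (hab : a ≠ b) (h0 : pr.lt ∅ {a}) (hba : pr.lt {b} {a}) :
    bestAlloc M pr {a, b} = {a} := by
  apply bestAlloc_eq_of M pr
  · refine mem_allocs'.mpr ⟨by simp, ?_⟩
    intro x hx y hy _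
    rw [Finset.mem_singleton.mp hx, Finset.mem_singleton.mp hy]
  · intro W hW
    obtain ⟨hsub, hall⟩ := mem_allocs'.mp hW
    by_cases ha : a ∈ W
    · by_cases hb : b ∈ W
      · exact absurd (hall a ha b hb hD) hab
      · have hWa : W = {a} := by
          apply Finset.Subset.antisymm
          · intro x hx
            rcases Finset.mem_insert.mp (hsub hx) with h | h
            · simp [h]
            · exact absurd (Finset.mem_singleton.mp h ▸ hx) hb
          · simpa using ha
        rw [hWa]
        exact pr.le_refl _
    · by_cases hb : b ∈ W
      · have hWb : W = {b} := by
          apply Finset.Subset.antisymm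
          · intro x hx
            rcases Finset.mem_insert.mp (hsub hx) with h | h
            · exact absurd (h ▸ hx) ha
            · simp [Finset.mem_singleton.mp h]
          · simpa using hb
        rw [hWb]
        exact Pref.le_of_lt' pr hba
      · have hW0 : W = ∅ := by
          apply Finset.eq_empty_of_forall_notMem
          intro x hx
          rcases Finset.mem_insert.mp (hsub hx) with h | h
          · exact ha (h ▸ hx)
          · exact hb ((Finset.mem_singleton.mp h) ▸ hx)
        rw [hW0]
        exact Pref.le_of_lt' pr h0

end Aux

/-- In the market with doctors `d₁ = 0, d₂ = 1`, hospitals `h₁ = 0, h₂ = 1` and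
contracts `x¹, …, x^k` (encoded as `some 0, …, some (k-1)`, all with doctor `d₁` and
hospital `h₁`) and `w` (encoded as `none`, with doctor `d₂` and hospital `h₂`), hospital
preferences `{x^k} ≻_{h₁} ⋯ ≻_{h₁} {x¹} ≻_{h₁} ∅` and `{w} ≻_{h₂} ∅`, and doctor `d₁`'s
preference `{x¹} P₁ {x²} P₁ ⋯ P₁ {x^k} P₁ ∅`: for any preference `P₂` of `d₂`, if
`{w} P₂ ∅` the stable allocations at `(P₁,P₂)` are exactly the sets `{x^j, w}`,
`1 ≤ j ≤ k`, and if `∅ P₂ {w}` they are exactly the sets `{x^j}`, `1 ≤ j ≤ k`. -/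
theorem stableSet_characterization (k : ℕ) [NeZero k]
    (M : Market (Fin 2) (Fin 2) (Option (Fin k)))
    (hxDs : ∀ i : Fin k, M.xD (some i) = 0) (hxDw : M.xD none = 1)
    (hxHs : ∀ i : Fin k, M.xH (some i) = 0) (hxHw : M.xH none = 1)
    (hpr1 : ∀ i j : Fin k, i < j →
      (M.prH 0).lt ({some i} : Finset (Option (Fin k))) {some j})
    (hpr1e : ∀ i : Fin k, (M.prH 0).lt (∅ : Finset (Option (Fin k))) {some i})
    (hpr2 : (M.prH 1).lt (∅ : Finset (Option (Fin k))) {none})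
    (P1 : Pref (Option (Fin k)))
    (hP1 : ∀ i j : Fin k, i < j →
      P1.lt ({some j} : Finset (Option (Fin k))) {some i})
    (hP1e : ∀ i : Fin k, P1.lt (∅ : Finset (Option (Fin k))) {some i})
    (P2 : Pref (Option (Fin k))) :
    (P2.lt (∅ : Finset (Option (Fin k))) {none} →
      ∀ Y : Finset (Option (Fin k)),
        IsStable M ![P1, P2] Y ↔ ∃ j : Fin k, Y = {some j, none}) ∧
    (P2.lt ({none} : Finset (Option (Fin k))) ∅ →
      ∀ Y : Finset (Option (Fin k)),
        IsStable M ![P1, P2] Y ↔ ∃ j : Fin k, Y = {some j}) := by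
  have h10 : (1 : Fin 2) ≠ 0 := by decide
  have h01 : (0 : Fin 2) ≠ 1 := by decide
  set P : Profile (Fin 2) (Option (Fin k)) := ![P1, P2] with hP
  have hP0 : P 0 = P1 := rfl
  have hP1v : P 1 = P2 := rfl
  -- part computations
  have hd0 : ∀ Y : Finset (Option (Fin k)),
      docPart M Y 0 = Y.filter (fun x => x ≠ none) := by
    intro Y; unfold docPart
    apply Finset.filter_congr
    intro x _
    cases x with
    | none => rw [hxDw]; simp [h10]
    | some i => rw [hxDs i]; simp
  have hh0 : ∀ Y : Finset (Option (Fin k)),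
      hospPart M Y 0 = Y.filter (fun x => x ≠ none) := by
    intro Y; unfold hospPart
    apply Finset.filter_congr
    intro x _
    cases x with
    | none => rw [hxHw]; simp [h10]
    | some i => rw [hxHs i]; simp
  have hd1 : ∀ Y : Finset (Option (Fin k)),
      docPart M Y 1 = if none ∈ Y then {none} else ∅ := by
    intro Y
    have h : docPart M Y 1 = Y.filter (fun x => x = none) := by
      unfold docPart
      apply Finset.filter_congr
      intro x _
      cases x with
      | none => rw [hxDw]; simp
      | some i => rw [hxDs i]; simp [h01]
    rw [h]; convert Finset.filter_eq' Y none
  have hh1 : ∀ Y : Finset (Option (Fin k)),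
      hospPart M Y 1 = if none ∈ Y then {none} else ∅ := by
    intro Y
    have h : hospPart M Y 1 = Y.filter (fun x => x = none) := by
      unfold hospPart
      apply Finset.filter_congr
      intro x _
      cases x with
      | none => rw [hxHw]; simp
      | some i => rw [hxHs i]; simp [h01]
    rw [h]; convert Finset.filter_eq' Y none
  have hCDu : ∀ Y, CD M P Y = Cd M P1 0 Y ∪ Cd M P2 1 Y := by
    intro Y; ext x
    simp [CD, Fin.exists_fin_two, hP]
  have hCHu : ∀ Y, CH M Y = Ch M 0 Y ∪ Ch M 1 Y := by
    intro Y; ext x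
    simp [CH, Fin.exists_fin_two]
  -- choice computations
  have hCd0 : ∀ (Y : Finset (Option (Fin k))) (j : Fin k),
      Y.filter (fun x => x ≠ none) = {some j} → Cd M P1 0 Y = {some j} := by
    intro Y j h
    unfold Cd
    rw [hd0, h]
    exact bestAlloc_single M P1 (hP1e j)
  have hCh0 : ∀ (Y : Finset (Option (Fin k))) (j : Fin k),
      Y.filter (fun x => x ≠ none) = {some j} → Ch M 0 Y = {some j} := by
    intro Y j h
    unfold Ch
    rw [hh0, h]
    exact bestAlloc_single M (M.prH 0) (hpr1e j)
  have hCd1pos : P2.lt ∅ {none} → ∀ Y : Finset (Option (Fin k)), none ∈ Y →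
      Cd M P2 1 Y = {none} := by
    intro hpos Y hn
    unfold Cd
    rw [hd1, if_pos hn]
    exact bestAlloc_single M P2 hpos
  have hCd1neg : P2.lt {none} ∅ → ∀ Y : Finset (Option (Fin k)), none ∈ Y →
      Cd M P2 1 Y = ∅ := by
    intro hneg Y hn
    unfold Cd
    rw [hd1, if_pos hn]
    exact bestAlloc_single_bot M P2 hneg
  have hCd1out : ∀ Y : Finset (Option (Fin k)), none ∉ Y → Cd M P2 1 Y = ∅ := by
    intro Y hn
    unfold Cd
    rw [hd1, if_neg hn]
    exact bestAlloc_empty M P2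
  have hCh1in : ∀ Y : Finset (Option (Fin k)), none ∈ Y → Ch M 1 Y = {none} := by
    intro Y hn
    unfold Ch
    rw [hh1, if_pos hn]
    exact bestAlloc_single M (M.prH 1) hpr2
  have hCh1out : ∀ Y : Finset (Option (Fin k)), none ∉ Y → Ch M 1 Y = ∅ := by
    intro Y hn
    unfold Ch
    rw [hh1, if_neg hn]
    exact bestAlloc_empty M (M.prH 1)
  -- no blocking by a second doctor-1 contract
  have hblockpair : ∀ (Z : Finset (Option (Fin k))) (i j : Fin k), i ≠ j →
      Z.filter (fun x => x ≠ none) = {some i, some j} →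
      ¬(some i ∈ Cd M (P (M.xD (some i))) (M.xD (some i)) Z ∧
        some i ∈ Ch M (M.xH (some i)) Z) := by
    intro Z i j hij hf
    rw [hxDs i, hxHs i, hP0]
    rintro ⟨h1, h2⟩
    have hji : (some j : Option (Fin k)) ≠ some i := by simpa using hij.symm
    rcases lt_trichotomy i j with h | h | h
    · have hch : Ch M 0 Z = {some j} := by
        unfold Ch
        rw [hh0, hf, Finset.pair_comm]
        exact bestAlloc_pair M (M.prH 0) (by rw [hxDs, hxDs]) hji (hpr1e j) (hpr1 i j h)
      rw [hch] at h2
      exact hij (by simpa using h2)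
    · exact hij h
    · have hcd : Cd M P1 0 Z = {some j} := by
        unfold Cd
        rw [hd0, hf, Finset.pair_comm]
        exact bestAlloc_pair M P1 (by rw [hxDs, hxDs]) hji (hP1e j) (hP1 j i h)
      rw [hcd] at h1
      exact hij (by simpa using h1)
  -- a stable allocation must employ some doctor-1 contract
  have hsome : ∀ Y : Finset (Option (Fin k)),
      (∀ x, x ∉ Y → ¬(x ∈ Cd M (P (M.xD x)) (M.xD x) (insert x Y) ∧
        x ∈ Ch M (M.xH x) (insert x Y))) → ∃ j : Fin k, some j ∈ Y := by
    intro Y hblk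
    by_contra hs
    push_neg at hs
    set i0 : Fin k := ⟨0, Nat.pos_of_ne_zero (NeZero.ne k)⟩ with hi0
    have hx : (some i0 : Option (Fin k)) ∉ Y := hs i0
    have hfY : Y.filter (fun x => x ≠ none) = ∅ := by
      apply Finset.filter_eq_empty_iff.mpr
      intro x hxY
      cases x with
      | none => simp
      | some i => exact absurd hxY (hs i)
    have hfI : (insert (some i0) Y).filter (fun x => x ≠ none) = {some i0} := by
      rw [Finset.filter_insert, if_pos (by simp), hfY]
      rfl
    refine hblk (some i0) hx ⟨?_, ?_⟩
    · rw [hxDs i0, hP0, hCd0 _ i0 hfI]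
      exact Finset.mem_singleton_self _
    · rw [hxHs i0, hCh0 _ i0 hfI]
      exact Finset.mem_singleton_self _
  constructor
  · -- case {w} P₂ ∅
    intro hpos Y
    constructor
    · rintro ⟨hall, hCDY, hCHY, hblk⟩
      have hn : none ∈ Y := by
        by_contra hn
        refine hblk none hn ⟨?_, ?_⟩
        · rw [hxDw, hP1v, hCd1pos hpos _ (Finset.mem_insert_self _ _)]
          exact Finset.mem_singleton_self _
        · rw [hxHw, hCh1in _ (Finset.mem_insert_self _ _)]
          exact Finset.mem_singleton_self _
      obtain ⟨j, hj⟩ := hsome Y hblk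
      refine ⟨j, ?_⟩
      ext x
      simp only [Finset.mem_insert, Finset.mem_singleton]
      constructor
      · intro hx
        cases x with
        | none => right; rfl
        | some i => left; exact hall _ hx _ hj (by rw [hxDs, hxDs])
      · rintro (h | h) <;> subst h
        · exact hj
        · exact hn
    · rintro ⟨j, rfl⟩
      have hfY : ({some j, none} : Finset (Option (Fin k))).filter (fun x => x ≠ none)
          = {some j} := by
        simp [Finset.filter_insert, Finset.filter_singleton]
      refine ⟨?_, ?_, ?_, ?_⟩
      · intro x hx y hy hxy
        have hx' : x = some j ∨ x = none := by simpa using hx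
        have hy' : y = some j ∨ y = none := by simpa using hy
        rcases hx' with rfl | rfl <;> rcases hy' with rfl | rfl
        · rfl
        · rw [hxDs, hxDw] at hxy; exact absurd hxy h01
        · rw [hxDw, hxDs] at hxy; exact absurd hxy h10
        · rfl
      · rw [hCDu, hCd0 _ j hfY, hCd1pos hpos _ (by simp)]
        ext x; simp
      · rw [hCHu, hCh0 _ j hfY, hCh1in _ (by simp)]
        ext x; simp
      · intro x hx hcon
        cases x with
        | none => exact hx (by simp)
        | some i =>
          have hij : i ≠ j := by
            intro e; subst e; exact hx (by simp)
          refine hblockpair (insert (some i) {some j, none}) i j hij ?_ hcon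
          rw [Finset.filter_insert, if_pos (by simp), hfY]
  · -- case ∅ P₂ {w}
    intro hneg Y
    constructor
    · rintro ⟨hall, hCDY, hCHY, hblk⟩
      have hn : none ∉ Y := by
        intro hn
        have h1 : none ∈ CD M P Y := hCDY.symm ▸ hn
        rw [hCDu] at h1
        rcases Finset.mem_union.mp h1 with h | h
        · have h' : none ∈ docPart M Y 0 := by
            unfold Cd at h
            exact bestAlloc_subset M P1 _ h
          rw [hd0] at h'
          exact (Finset.mem_filter.mp h').2 rfl
        · rw [hCd1neg hneg _ hn] at h
          simpa using h
      obtain ⟨j, hj⟩ := hsome Y hblk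
      refine ⟨j, ?_⟩
      ext x
      simp only [Finset.mem_singleton]
      constructor
      · intro hx
        cases x with
        | none => exact absurd hx hn
        | some i => exact hall _ hx _ hj (by rw [hxDs, hxDs])
      · rintro rfl; exact hj
    · rintro ⟨j, rfl⟩
      have hfY : ({some j} : Finset (Option (Fin k))).filter (fun x => x ≠ none)
          = {some j} := by
        simp [Finset.filter_singleton]
      have hnY : none ∉ ({some j} : Finset (Option (Fin k))) := by simp
      refine ⟨?_, ?_, ?_, ?_⟩
      · intro x hx y hy _
        rw [Finset.mem_singleton.mp hx, Finset.mem_singleton.mp hy]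
      · rw [hCDu, hCd0 _ j hfY, hCd1out _ hnY, Finset.union_empty]
      · rw [hCHu, hCh0 _ j hfY, hCh1out _ hnY, Finset.union_empty]
      · intro x hx hcon
        cases x with
        | none =>
          obtain ⟨h1, _⟩ := hcon
          rw [hxDw, hP1v, hCd1neg hneg _ (Finset.mem_insert_self _ _)] at h1
          simpa using h1
        | some i =>
          have hij : i ≠ j := by
            intro e; subst e; exact hx (by simp)
          refine hblockpair (insert (some i) {some j}) i j hij ?_ hcon
          rw [Finset.filter_insert, if_pos (by simp), hfY]

end Matching
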